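/- Under the decentralized-memory setup, let additionally r > 0, define p(x) = (a/3)∑_{j=1}^{d−1} |⟨e_{j+1} − e_j, x⟩| − (a/3)⟨e_1, x⟩ + (r/2)‖x‖² and x* = (a/(3rd))·1_d. Then for every i ∈ {1,…,n}, every τ with 0 ≤ τ < τ_com·n(d−1)/6, and every x ∈ mem_i(τ), one has p(x) − p(x*) ≥ a²/(18rd). -/

import Mathlib

open scoped BigOperators RealInnerProductSpace Classical

noncomputable section

/-- The `k`-th standard basis vector of `ℝ^d`, `0`-indexed (so the paper's `e_k` is
`stdBasis d (k-1)`); out-of-range indices give `0`. -/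
def stdBasis (d j : ℕ) : EuclideanSpace ℝ (Fin d) :=
  if h : j < d then EuclideanSpace.single ⟨j, h⟩ 1 else 0

/-- The subgradient oracle `∇̂h_j` (paper's `1`-indexed `j`, so `e_{j+1} = stdBasis d j`
and `e_j = stdBasis d (j-1)`). -/
def gradh (d j : ℕ) (x : EuclideanSpace ℝ (Fin d)) : EuclideanSpace ℝ (Fin d) :=
  if ⟪stdBasis d (j - 1), x⟫ < ⟪stdBasis d j, x⟫ then stdBasis d j - stdBasis d (j - 1)
  else if ⟪stdBasis d j, x⟫ < ⟪stdBasis d (j - 1), x⟫ then stdBasis d (j - 1) - stdBasis d j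
  else 0

/-- `K_j = span{e_1, …, e_j}`. -/
def Ksub (d j : ℕ) : Submodule ℝ (EuclideanSpace ℝ (Fin d)) :=
  Submodule.span ℝ {v | ∃ i < j, v = stdBasis d i}

/-- The subgradient oracle `∇̂f_i` (nodes `i` are `1`-indexed, `i ∈ {1,…,n}`). -/
def oracle (d n : ℕ) (a : ℝ) (i : ℕ) (x : EuclideanSpace ℝ (Fin d)) :
    EuclideanSpace ℝ (Fin d) :=
  if i ≤ n / 3 then
    a • (∑ j ∈ Finset.Icc 1 ((d - 1) / 2), gradh d (2 * j - 1) x) - a • stdBasis d 0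
  else if i ≤ 2 * n / 3 then
    a • ∑ j ∈ Finset.Icc 1 ((d - 1) / 2), gradh d (2 * j) x
  else 0

/-- The time-varying center node `i_c(τ) = 2n/3 + 1 + (⌊τ/τ_com⌋ mod (n/3))`. -/
def center (n : ℕ) (τcom τ : ℝ) : ℕ := 2 * n / 3 + 1 + (⌊τ / τcom⌋₊ % (n / 3))

/-- The set of `j` such that `(j, i) ∈ E(τ)` for the star graph with center `i_c(τ)`. -/
def inEdges (n : ℕ) (τcom τ : ℝ) (i : ℕ) : Set ℕ :=
  {j | 1 ≤ j ∧ j ≤ n ∧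
    ((j = center n τcom τ ∧ i ≠ center n τcom τ) ∨
     (i = center n τcom τ ∧ j ≠ center n τcom τ))}

/-- `memloc_i(τ)`: memory obtainable by a local subgradient computation. -/
def memloc (d : ℕ) (τsub : ℝ)
    (gfun : ℕ → EuclideanSpace ℝ (Fin d) → EuclideanSpace ℝ (Fin d))
    (mem : ℕ → ℝ → Set (EuclideanSpace ℝ (Fin d))) (i : ℕ) (τ : ℝ) :
    Set (EuclideanSpace ℝ (Fin d)) :=
  if τsub ≤ τ then
    ↑(Submodule.span ℝ (mem i (τ - τsub) ∪ (gfun i '' mem i (τ - τsub))))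
  else ∅

/-- `memcom_i(τ)`: memory obtainable by decentralized communication. -/
def memcom (d n : ℕ) (τcom : ℝ)
    (mem : ℕ → ℝ → Set (EuclideanSpace ℝ (Fin d))) (i : ℕ) (τ : ℝ) :
    Set (EuclideanSpace ℝ (Fin d)) :=
  if τcom ≤ τ then
    ↑(Submodule.span ℝ (⋃ j ∈ inEdges n τcom τ i, mem j (τ - τcom)))
  else ∅

/-! ### Auxiliary numeric caps -/

section NatCaps
variable (m : ℕ)

/-- Public (broadcast) level cap at window `w`. -/
def fcap (w : ℕ) : ℕ := if w ≤ m then 0 else w / (m + 1) + 1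

/-- Even closure (V₁ node cap) of a public level. -/
def evl (ℓ : ℕ) : ℕ := if ℓ % 2 = 0 then max 2 ℓ else ℓ + 1

/-- Odd-or-zero closure (V₂ node cap) of a public level. -/
def odl (ℓ : ℕ) : ℕ := if ℓ % 2 = 1 then ℓ else if ℓ = 0 then 0 else ℓ + 1

/-- Last window `≤ w` at which the V₃ node with offset `j` was the center (`0` if none). -/
def lastc (j w : ℕ) : ℕ := Nat.findGreatest (fun w' => 1 ≤ w' ∧ w' % m = j) w

/-- Cap for what V₃ node with offset `j` may have gathered as center. -/
def gcap (j w : ℕ) : ℕ :=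
  if lastc m j w = 0 then 0 else max 2 (fcap m (lastc m j w - 1) + 1)

lemma lastc_mono (j : ℕ) : Monotone (lastc m j) := fun _ _ h =>
  Nat.findGreatest_mono_right _ h

lemma lastc_le (j w : ℕ) : lastc m j w ≤ w := Nat.findGreatest_le _

lemma lastc_spec {j w : ℕ} (h : lastc m j w ≠ 0) :
    1 ≤ lastc m j w ∧ lastc m j w % m = j :=
  Nat.findGreatest_of_ne_zero rfl h

/-- Cap for a V₃ node with offset `j` at window `w`. -/
def v3cap (j w : ℕ) : ℕ := max (fcap m w) (gcap m j w)

/-- Memory level cap of node `i` at window `w`. -/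
def cap (i w : ℕ) : ℕ :=
  if i ≤ m then evl (fcap m w)
  else if i ≤ 2 * m then odl (fcap m w)
  else v3cap m (i - (2 * m + 1)) w

lemma fcap_mono : Monotone (fcap m) := by
  intro u v huv
  unfold fcap
  split_ifs with h1 h2 h2
  · exact le_rfl
  · exact Nat.zero_le _
  · omega
  · exact Nat.add_le_add_right (Nat.div_le_div_right huv) 1

lemma le_evl (ℓ : ℕ) : ℓ ≤ evl ℓ := by unfold evl; split_ifs <;> omega
lemma le_odl (ℓ : ℕ) : ℓ ≤ odl ℓ := by unfold odl; split_ifs <;> omega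
lemma evl_even (ℓ : ℕ) : evl ℓ % 2 = 0 ∧ 2 ≤ evl ℓ := by unfold evl; split_ifs <;> omega
lemma odl_odd (ℓ : ℕ) : odl ℓ = 0 ∨ odl ℓ % 2 = 1 := by unfold odl; split_ifs <;> omega
lemma evl_mono : Monotone evl := by intro u v h; unfold evl; split_ifs <;> omega
lemma odl_mono : Monotone odl := by intro u v h; unfold odl; split_ifs <;> omega
lemma evl_le (ℓ : ℕ) : evl ℓ ≤ max 2 (ℓ + 1) := by unfold evl; split_ifs <;> omega
lemma odl_le (ℓ : ℕ) : odl ℓ ≤ max 2 (ℓ + 1) := by unfold odl; split_ifs <;> omega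

lemma gcap_mono (j : ℕ) : Monotone (gcap m j) := by
  intro u v huv
  unfold gcap
  have hL : lastc m j u ≤ lastc m j v := lastc_mono m j huv
  split_ifs with h1 h2 h2
  · exact le_rfl
  · exact Nat.zero_le _
  · omega
  · exact max_le (le_max_left _ _)
      (le_max_of_le_right (Nat.add_le_add_right (fcap_mono m (by omega)) 1))

lemma v3cap_mono (j : ℕ) : Monotone (v3cap m j) := fun u v h =>
  max_le_max (fcap_mono m h) (gcap_mono m j h)

lemma cap_mono (i : ℕ) : Monotone (cap m i) := by
  intro u v h
  unfold cap
  split_ifs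
  · exact evl_mono (fcap_mono m h)
  · exact odl_mono (fcap_mono m h)
  · exact v3cap_mono m _ h

lemma fcap_le_cap (i w : ℕ) : fcap m w ≤ cap m i w := by
  unfold cap
  split_ifs
  · exact le_evl _
  · exact le_odl _
  · exact le_max_left _ _

lemma gcap_le_pub (j w : ℕ) : gcap m j w ≤ max 2 (fcap m (w - 1) + 1) := by
  unfold gcap
  split_ifs with h1
  · exact Nat.zero_le _
  · have hL : lastc m j w ≤ w := lastc_le m j w
    exact max_le (le_max_left _ _)
      (le_max_of_le_right (Nat.add_le_add_right (fcap_mono m (by omega)) 1))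

lemma cap_le_pub (i w : ℕ) : cap m i w ≤ max 2 (fcap m w + 1) := by
  unfold cap
  split_ifs
  · exact evl_le _
  · exact odl_le _
  · refine max_le (by omega) ((gcap_le_pub m _ w).trans ?_)
    have := fcap_mono m (Nat.sub_le w 1)
    omega

/-- Key recursion: the content gathered a full cycle ago is below the current public cap. -/
lemma fcap_step (hm : 1 ≤ m) {w : ℕ} (hw : m + 1 ≤ w) :
    max 2 (fcap m (w - m - 1) + 1) ≤ fcap m w := by
  have hfw : fcap m w = w / (m + 1) + 1 := by unfold fcap; rw [if_neg (by omega)]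
  have h1 : 1 ≤ w / (m + 1) := (Nat.one_le_div_iff (by omega)).2 hw
  rcases le_or_gt (w - m - 1) m with h | h
  · have : fcap m (w - m - 1) = 0 := by unfold fcap; rw [if_pos h]
    omega
  · have hsub : fcap m (w - m - 1) = (w - (m + 1)) / (m + 1) + 1 := by
      unfold fcap; rw [if_neg (by omega), Nat.sub_sub]
    have hdiv : w / (m + 1) = (w - (m + 1)) / (m + 1) + 1 :=
      Nat.div_eq_sub_div (by omega) hw
    omega

/-- What the center of window `w` could broadcast (its window `w-1` memory) is
below `fcap w`. -/
lemma center_broadcast (hm : 1 ≤ m) {w : ℕ} (hw : 1 ≤ w) :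
    v3cap m (w % m) (w - 1) ≤ fcap m w := by
  refine max_le (fcap_mono m (by omega)) ?_
  unfold gcap
  split_ifs with h1
  · exact Nat.zero_le _
  · set L := lastc m (w % m) (w - 1) with hLdef
    have hLle : L ≤ w - 1 := lastc_le m _ _
    obtain ⟨hL1, hmod⟩ := lastc_spec m h1
    have hdvd : m ∣ w - L := (Nat.modEq_iff_dvd' (by omega)).1 (hmod : L % m = w % m)
    have hge : m ≤ w - L := Nat.le_of_dvd (by omega) hdvd
    have hw2 : m + 1 ≤ w := by omega
    refine le_trans ?_ (fcap_step m hm hw2)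
    have : fcap m (L - 1) ≤ fcap m (w - m - 1) := fcap_mono m (by omega)
    omega

/-- The center of window `w` may gather everything of level `≤ fcap (w-1) + 1`. -/
lemma center_gather {w : ℕ} (hw : 1 ≤ w) :
    max 2 (fcap m (w - 1) + 1) ≤ v3cap m (w % m) w := by
  refine le_max_of_le_right ?_
  have hself : w ≤ lastc m (w % m) w := Nat.le_findGreatest le_rfl ⟨hw, rfl⟩
  have hle : lastc m (w % m) w ≤ w := lastc_le m _ _
  have hLw : lastc m (w % m) w = w := le_antisymm hle hself
  unfold gcap
  rw [hLw, if_neg (by omega)]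

/-- Final numeric bound. -/
lemma cap_le_final (hm : 1 ≤ m) {d : ℕ} (hd : 3 ≤ d) {w i : ℕ}
    (hw : 2 * w < m * (d - 1)) : cap m i w ≤ d - 1 := by
  refine (cap_le_pub m i w).trans ?_
  have hf : fcap m w + 1 ≤ d - 1 := by
    unfold fcap
    split_ifs with h1
    · omega
    · obtain ⟨e, he⟩ : ∃ e, d = e + 3 := ⟨d - 3, by omega⟩
      subst he
      have hw' : 2 * w < m * (e + 2) := by
        have : e + 3 - 1 = e + 2 := by omega
        rwa [this] at hw
      have hlt : w < (e + 1) * (m + 1) := by nlinarith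
      have : w / (m + 1) < e + 1 := (Nat.div_lt_iff_lt_mul (by omega)).2 hlt
      omega
  omega

end NatCaps

/-! ### The coordinate subspaces and oracle behaviour -/

/-- The submodule of vectors supported on coordinates `< j`. -/
def myK (d j : ℕ) : Submodule ℝ (EuclideanSpace ℝ (Fin d)) where
  carrier := {x | ∀ k : Fin d, j ≤ (k : ℕ) → x k = 0}
  add_mem' := by
    intro x y hx hy k hk
    have : (x + y) k = x k + y k := rfl
    rw [this, hx k hk, hy k hk, add_zero]
  zero_mem' := fun k _ => rfl
  smul_mem' := by
    intro c x hx k hk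
    have : (c • x) k = c * x k := rfl
    rw [this, hx k hk, mul_zero]

lemma myK_mono {d j k : ℕ} (h : j ≤ k) : myK d j ≤ myK d k := by
  intro x hx i hi
  exact hx i (le_trans h hi)

lemma stdBasis_mem {d j k : ℕ} (h : j < k) : stdBasis d j ∈ myK d k := by
  unfold stdBasis
  split_ifs with hd
  · intro i hi
    rw [EuclideanSpace.single_apply, if_neg]
    intro he
    rw [he] at hi
    simp at hi
    omega
  · exact zero_mem _

lemma inner_stdBasis {d j : ℕ} (x : EuclideanSpace ℝ (Fin d)) :
    ⟪stdBasis d j, x⟫ = if h : j < d then x ⟨j, h⟩ else 0 := by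
  unfold stdBasis
  split_ifs with h
  · rw [EuclideanSpace.inner_single_left]; simp
  · exact inner_zero_left x

lemma inner_stdBasis_eq_zero {d j ℓ : ℕ} {x : EuclideanSpace ℝ (Fin d)}
    (hx : x ∈ myK d ℓ) (h : ℓ ≤ j) : ⟪stdBasis d j, x⟫ = 0 := by
  rw [inner_stdBasis]
  split_ifs with hd
  · exact hx ⟨j, hd⟩ h
  · rfl

lemma gradh_mem {d j : ℕ} (x : EuclideanSpace ℝ (Fin d)) : gradh d j x ∈ myK d (j + 1) := by
  unfold gradh
  have h1 : stdBasis d j ∈ myK d (j + 1) := stdBasis_mem (by omega)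
  have h2 : stdBasis d (j - 1) ∈ myK d (j + 1) := stdBasis_mem (by omega)
  split_ifs
  · exact sub_mem h1 h2
  · exact sub_mem h2 h1
  · exact zero_mem _

lemma gradh_eq_zero {d j ℓ : ℕ} {x : EuclideanSpace ℝ (Fin d)}
    (hx : x ∈ myK d ℓ) (h : ℓ + 1 ≤ j) : gradh d j x = 0 := by
  unfold gradh
  rw [inner_stdBasis_eq_zero hx (by omega : ℓ ≤ j),
    inner_stdBasis_eq_zero hx (by omega : ℓ ≤ j - 1)]
  simp

lemma oracleV1_mem {d n : ℕ} {a : ℝ} {i ℓ : ℕ} {x : EuclideanSpace ℝ (Fin d)}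
    (hx : x ∈ myK d ℓ) (hi : i ≤ n / 3) (h2 : 2 ≤ ℓ) (he : ℓ % 2 = 0) :
    oracle d n a i x ∈ myK d ℓ := by
  unfold oracle
  rw [if_pos hi]
  refine sub_mem (Submodule.smul_mem _ _ (Submodule.sum_mem _ ?_))
    (Submodule.smul_mem _ _ (stdBasis_mem (by omega)))
  intro t ht
  rw [Finset.mem_Icc] at ht
  by_cases hc : 2 * t - 1 + 1 ≤ ℓ
  · exact myK_mono hc (gradh_mem x)
  · rw [gradh_eq_zero hx (by omega)]
    exact zero_mem _

lemma oracleV2_mem {d n : ℕ} {a : ℝ} {i ℓ : ℕ} {x : EuclideanSpace ℝ (Fin d)}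
    (hx : x ∈ myK d ℓ) (hi1 : ¬ i ≤ n / 3) (hi2 : i ≤ 2 * n / 3) (ho : ℓ = 0 ∨ ℓ % 2 = 1) :
    oracle d n a i x ∈ myK d ℓ := by
  unfold oracle
  rw [if_neg hi1, if_pos hi2]
  refine Submodule.smul_mem _ _ (Submodule.sum_mem _ ?_)
  intro t ht
  rw [Finset.mem_Icc] at ht
  by_cases hc : 2 * t + 1 ≤ ℓ
  · exact myK_mono hc (gradh_mem x)
  · rw [gradh_eq_zero hx (by omega)]
    exact zero_mem _

lemma oracleV3_mem {d n : ℕ} {a : ℝ} {i ℓ : ℕ} {x : EuclideanSpace ℝ (Fin d)}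
    (hi2 : ¬ i ≤ 2 * n / 3) : oracle d n a i x ∈ myK d ℓ := by
  unfold oracle
  rw [if_neg (by omega : ¬ i ≤ n / 3), if_neg hi2]
  exact zero_mem _

/-! ### Analytic facts about the objective -/

lemma p_nonneg {d : ℕ} (hd : 3 ≤ d) {a r : ℝ} (ha : 0 < a) (hr : 0 < r)
    (x : EuclideanSpace ℝ (Fin d)) (hlast : ⟪stdBasis d (d - 1), x⟫ = 0) :
    0 ≤ (a / 3) * ∑ j ∈ Finset.Icc 1 (d - 1), |⟪stdBasis d j - stdBasis d (j - 1), x⟫|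
        - (a / 3) * ⟪stdBasis d 0, x⟫ + (r / 2) * ‖x‖ ^ 2 := by
  set g : ℕ → ℝ := fun j => ⟪stdBasis d j, x⟫ with hg
  have hterm : ∀ j, ⟪stdBasis d j - stdBasis d (j - 1), x⟫ = g j - g (j - 1) := by
    intro j; rw [inner_sub_left]
  have htele : ∑ j ∈ Finset.Icc 1 (d - 1), (g j - g (j - 1)) = g (d - 1) - g 0 := by
    have hIcc : Finset.Icc 1 (d - 1) = Finset.Ico 1 d := by
      rw [← Finset.Ico_add_one_right_eq_Icc]
      congr 1
      omega
    rw [hIcc, Finset.sum_Ico_eq_sum_range]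
    have hcong : ∀ i, g (1 + i) - g (1 + i - 1) = g (i + 1) - g i := by
      intro i; congr 2 <;> omega
    rw [Finset.sum_congr rfl fun i _ => hcong i, Finset.sum_range_sub g (d - 1)]
  have hkey : g 0 ≤ ∑ j ∈ Finset.Icc 1 (d - 1), |g j - g (j - 1)| := by
    have h1 : |∑ j ∈ Finset.Icc 1 (d - 1), (g j - g (j - 1))|
        ≤ ∑ j ∈ Finset.Icc 1 (d - 1), |g j - g (j - 1)| :=
      Finset.abs_sum_le_sum_abs _ _
    have hg0 : g (d - 1) = 0 := hlast
    rw [htele, hg0] at h1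
    calc g 0 ≤ |g 0| := le_abs_self _
      _ = |0 - g 0| := by rw [zero_sub, abs_neg]
      _ ≤ _ := h1
  have hsum : ∑ j ∈ Finset.Icc 1 (d - 1), |⟪stdBasis d j - stdBasis d (j - 1), x⟫|
      = ∑ j ∈ Finset.Icc 1 (d - 1), |g j - g (j - 1)| := by
    refine Finset.sum_congr rfl fun j _ => by rw [hterm]
  rw [hsum]
  have h2 : 0 ≤ (r / 2) * ‖x‖ ^ 2 := by positivity
  nlinarith [hkey, h2, ha.le]

lemma p_xstar_val {d : ℕ} (hd : 3 ≤ d) {a r : ℝ} (ha : 0 < a) (hr : 0 < r) :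
    (a / 3) * ∑ j ∈ Finset.Icc 1 (d - 1),
        |⟪stdBasis d j - stdBasis d (j - 1),
          ((WithLp.equiv 2 (Fin d → ℝ)).symm fun _ => a / (3 * r * d))⟫|
      - (a / 3) * ⟪stdBasis d 0,
          ((WithLp.equiv 2 (Fin d → ℝ)).symm fun _ => a / (3 * r * d))⟫
      + (r / 2) * ‖((WithLp.equiv 2 (Fin d → ℝ)).symm fun _ => a / (3 * r * d) :
          EuclideanSpace ℝ (Fin d))‖ ^ 2
    = -(a ^ 2 / (18 * r * d)) := by
  set c : ℝ := a / (3 * r * d) with hc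
  set y : EuclideanSpace ℝ (Fin d) := (WithLp.equiv 2 (Fin d → ℝ)).symm fun _ => c with hy
  have happ : ∀ k : Fin d, y k = c := fun k => rfl
  have hinner : ∀ j : ℕ, j < d → ⟪stdBasis d j, y⟫ = c := by
    intro j hj
    rw [inner_stdBasis, dif_pos hj, happ]
  have hzero : ∀ j ∈ Finset.Icc 1 (d - 1), |⟪stdBasis d j - stdBasis d (j - 1), y⟫| = 0 := by
    intro j hj
    rw [Finset.mem_Icc] at hj
    rw [inner_sub_left, hinner j (by omega), hinner (j - 1) (by omega), sub_self, abs_zero]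
  rw [Finset.sum_congr rfl hzero, Finset.sum_const, smul_zero, mul_zero,
    hinner 0 (by omega)]
  have hnorm : ‖y‖ ^ 2 = d * c ^ 2 := by
    rw [EuclideanSpace.norm_eq]
    rw [Real.sq_sqrt (Finset.sum_nonneg fun i _ => sq_nonneg _)]
    simp only [happ, Real.norm_eq_abs, sq_abs, Finset.sum_const, Finset.card_univ,
      nsmul_eq_mul, Fintype.card_fin]
  rw [hnorm, hc]
  have hd0 : (d : ℝ) ≠ 0 := by positivity
  field_simp
  ring

/-! ### The main memory invariant -/

lemma memory_invariant (d n : ℕ) (hn : 3 ≤ n) (hn3 : 3 ∣ n)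
    (a τcom τsub : ℝ) (hcom : 0 < τcom) (hsub : 0 < τsub)
    (mem : ℕ → ℝ → Set (EuclideanSpace ℝ (Fin d)))
    (hmem : ∀ i τ, 0 ≤ τ →
      mem i τ ⊆ {0} ∪ memloc d τsub (oracle d n a) mem i τ ∪ memcom d n τcom mem i τ) :
    ∀ k : ℕ, ∀ τ : ℝ, 0 ≤ τ → τ < (k : ℝ) * min τsub τcom →
      ∀ i, 1 ≤ i → i ≤ n →
        mem i τ ⊆ (myK d (cap (n / 3) i (⌊τ / τcom⌋₊)) : Set (EuclideanSpace ℝ (Fin d))) := by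
  obtain ⟨m, rfl⟩ := hn3
  have hm1 : 1 ≤ m := by omega
  have hdiv : 3 * m / 3 = m := by omega
  have hdiv2 : 2 * (3 * m) / 3 = 2 * m := by omega
  have hε : 0 < min τsub τcom := lt_min hsub hcom
  intro k
  induction k with
  | zero =>
    intro τ h0 hk
    exfalso
    rw [Nat.cast_zero, zero_mul] at hk
    linarith
  | succ k ih =>
    intro τ h0 hk i hi1 hin x hx
    rw [hdiv]
    set w := ⌊τ / τcom⌋₊ with hw
    rcases hmem i τ h0 hx with (h | h) | h
    · -- trivial memory
      rw [Set.mem_singleton_iff] at h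
      rw [h]
      exact zero_mem _
    · -- local computation
      rw [memloc] at h
      split_ifs at h with hts
      · have h0' : 0 ≤ τ - τsub := by linarith
        have hk' : τ - τsub < (k : ℝ) * min τsub τcom := by
          have h1 : min τsub τcom ≤ τsub := min_le_left _ _
          push_cast at hk ⊢
          nlinarith
        have IH := ih (τ - τsub) h0' hk' i hi1 hin
        rw [hdiv] at IH
        have hww : ⌊(τ - τsub) / τcom⌋₊ ≤ w := by
          apply Nat.floor_mono
          gcongr <;> linarith
        have hS : mem i (τ - τsub) ⊆ (myK d (cap m i w) : Set _) :=
          IH.trans (myK_mono (cap_mono m i hww))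
        refine Submodule.span_le.mpr ?_ h
        refine Set.union_subset hS ?_
        rintro y ⟨z, hz, rfl⟩
        have hzK : z ∈ myK d (cap m i w) := hS hz
        by_cases hc1 : i ≤ m
        · have hcap : cap m i w = evl (fcap m w) := by unfold cap; rw [if_pos hc1]
          rw [hcap] at hzK ⊢
          exact oracleV1_mem hzK (by rw [hdiv]; exact hc1) (evl_even _).2 (evl_even _).1
        · by_cases hc2 : i ≤ 2 * m
          · have hcap : cap m i w = odl (fcap m w) := by
              unfold cap; rw [if_neg hc1, if_pos hc2]
            rw [hcap] at hzK ⊢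
            exact oracleV2_mem hzK (by rw [hdiv]; exact hc1) (by rw [hdiv2]; exact hc2)
              (odl_odd _)
          · exact oracleV3_mem (by rw [hdiv2]; exact hc2)
      · exact absurd h (Set.notMem_empty x)
    · -- communication
      rw [memcom] at h
      split_ifs at h with htc
      · have h0' : 0 ≤ τ - τcom := by linarith
        have hk' : τ - τcom < (k : ℝ) * min τsub τcom := by
          have h1 : min τsub τcom ≤ τcom := min_le_right _ _
          push_cast at hk ⊢
          nlinarith
        have hw1 : 1 ≤ w := by
          apply Nat.le_floor
          rw [Nat.cast_one]
          exact (one_le_div hcom).mpr htc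
        have hwprev : ⌊(τ - τcom) / τcom⌋₊ = w - 1 := by
          have hdd : (τ - τcom) / τcom = τ / τcom - 1 := by
            rw [sub_div, div_self hcom.ne']
          rw [hdd, Nat.floor_sub_one]
        have hcen : center (3 * m) τcom τ = 2 * m + 1 + (w % m) := by
          unfold center
          rw [hdiv, hdiv2]
        refine Submodule.span_le.mpr ?_ h
        intro y hy
        simp only [Set.mem_iUnion] at hy
        obtain ⟨j, hj, hyj⟩ := hy
        obtain ⟨hj1, hjn, hcase⟩ := hj
        have IH := ih (τ - τcom) h0' hk' j hj1 hjn hyj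
        rw [hdiv, hwprev] at IH
        rcases hcase with ⟨hjc, hic⟩ | ⟨hic, hjc⟩
        · -- j is the center, i is not
          have hcapj : cap m j (w - 1) = v3cap m (w % m) (w - 1) := by
            have hj' : j = 2 * m + 1 + (w % m) := by rw [hjc, hcen]
            have hmod : w % m < m := Nat.mod_lt _ (by omega)
            unfold cap
            rw [if_neg (by omega), if_neg (by omega)]
            congr 1
            omega
          rw [hcapj] at IH
          have hle : v3cap m (w % m) (w - 1) ≤ cap m i w :=
            (center_broadcast m hm1 hw1).trans (fcap_le_cap m i w)
          exact myK_mono hle IH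
        · -- i is the center
          have hcapi : cap m i w = v3cap m (w % m) w := by
            have hi' : i = 2 * m + 1 + (w % m) := by rw [hic, hcen]
            have hmod : w % m < m := Nat.mod_lt _ (by omega)
            unfold cap
            rw [if_neg (by omega), if_neg (by omega)]
            congr 1
            omega
          rw [hcapi]
          have hle : cap m j (w - 1) ≤ v3cap m (w % m) w :=
            (cap_le_pub m j (w - 1)).trans (center_gather m hw1)
          exact myK_mono hle IH
      · exact absurd h (Set.notMem_empty x)

theorem stmt10 (d n : ℕ) (hd : 3 ≤ d) (hodd : d % 2 = 1) (hn : 3 ≤ n) (hn3 : 3 ∣ n)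
    (a τcom τsub : ℝ) (ha : 0 < a) (hcom : 0 < τcom) (hsub : 0 < τsub)
    (mem : ℕ → ℝ → Set (EuclideanSpace ℝ (Fin d)))
    (hmem0 : ∀ i, mem i 0 = {0})
    (hmem : ∀ i τ, 0 ≤ τ →
      mem i τ ⊆ {0} ∪ memloc d τsub (oracle d n a) mem i τ ∪ memcom d n τcom mem i τ)
    (r : ℝ) (hr : 0 < r)
    (p : EuclideanSpace ℝ (Fin d) → ℝ)
    (hp : ∀ x, p x =
      (a / 3) * ∑ j ∈ Finset.Icc 1 (d - 1), |⟪stdBasis d j - stdBasis d (j - 1), x⟫|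
        - (a / 3) * ⟪stdBasis d 0, x⟫ + (r / 2) * ‖x‖ ^ 2)
    (xstar : EuclideanSpace ℝ (Fin d))
    (hxstar : xstar = (WithLp.equiv 2 (Fin d → ℝ)).symm fun _ => a / (3 * r * d)) :
    ∀ i, 1 ≤ i → i ≤ n → ∀ τ : ℝ, 0 ≤ τ → τ < τcom * (n * (d - 1) : ℕ) / 6 →
      ∀ x ∈ mem i τ, a ^ 2 / (18 * r * d) ≤ p x - p xstar := by
  intro i hi1 hin τ h0 hT x hx
  set ε := min τsub τcom with hε
  have hε0 : 0 < ε := lt_min hsub hcom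
  set k := ⌊τ / ε⌋₊ + 1 with hkdef
  have hk : τ < (k : ℝ) * ε := by
    have h1 : τ / ε < (k : ℝ) := by
      rw [hkdef]; push_cast
      exact Nat.lt_floor_add_one (τ / ε)
    calc τ = (τ / ε) * ε := by field_simp
      _ < (k : ℝ) * ε := by exact mul_lt_mul_of_pos_right h1 hε0
  have hinv := memory_invariant d n hn hn3 a τcom τsub hcom hsub mem hmem k τ h0 hk
    i hi1 hin hx
  -- numeric bound on the window
  set m := n / 3 with hm
  obtain ⟨m', hm'⟩ := hn3
  have hmm : n = 3 * m := by omega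
  set w := ⌊τ / τcom⌋₊ with hw
  have hwb : 2 * w < m * (d - 1) := by
    have h1 : (w : ℝ) ≤ τ / τcom := Nat.floor_le (div_nonneg h0 hcom.le)
    have h2 : τ / τcom < ((n * (d - 1) : ℕ) : ℝ) / 6 := by
      rw [div_lt_iff₀ hcom]
      calc τ < τcom * (n * (d - 1) : ℕ) / 6 := hT
        _ = ((n * (d - 1) : ℕ) : ℝ) / 6 * τcom := by ring
    have h3 : (6 * w : ℝ) < ((n * (d - 1) : ℕ) : ℝ) := by
      have := h1.trans_lt h2
      nlinarith
    have h4 : 6 * w < n * (d - 1) := by exact_mod_cast h3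
    have h5 : n * (d - 1) = 3 * (m * (d - 1)) := by rw [hmm]; ring
    omega
  have hcap : cap m i w ≤ d - 1 := cap_le_final m (by omega) hd hwb
  have hxK : x ∈ myK d (d - 1) := myK_mono hcap hinv
  have hlast : ⟪stdBasis d (d - 1), x⟫ = 0 := inner_stdBasis_eq_zero hxK le_rfl
  have hpx : 0 ≤ p x := by rw [hp]; exact p_nonneg hd ha hr x hlast
  have hpxstar : p xstar = -(a ^ 2 / (18 * r * d)) := by
    rw [hp, hxstar]
    exact p_xstar_val hd ha hr
  rw [hpxstar]
  linarith

end
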